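/- There is an absolute constant c > 0 such that the following holds. Let G be a 2D SLP deriving a 2D string T over a finite alphabet Σ of size N×M. Then there exists a 1D SLP of size at most c·|G|·N deriving the 1D string T[1]·T[2]·⋯·T[N] of length N·M, i.e., the concatenation of all rows of T from top to bottom, where T[i] denotes the i-th row of T. -/

import Mathlib

/-!
## Two-dimensional strings.
A 2D string over alphabet `A` of size `h × w` is represented canonically:
`f i j` is `some` of the character in (0-indexed) row `i`, column `j` when
`i < h` and `j < w`, and `none` outside of the rectangle.  All operations
below produce such canonical representations, so equality of 2D strings
built from them coincides with equality of the dimensions and of all entries.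
-/
structure Str2 (A : Type) where
  h : ℕ
  w : ℕ
  f : ℕ → ℕ → Option A

namespace Str2

variable {A : Type}

/-- Canonical constructor: pads with `none` outside of the `h × w` rectangle. -/
def mk' (h w : ℕ) (g : ℕ → ℕ → Option A) : Str2 A :=
  ⟨h, w, fun i j => if i < h ∧ j < w then g i j else none⟩

/-- The empty 2D string. -/
def empty : Str2 A := ⟨0, 0, fun _ _ => none⟩

/-- The `1 × 1` 2D string consisting of a single character. -/
def single (a : A) : Str2 A := mk' 1 1 fun _ _ => some a

/-- Horizontal concatenation `S ⊞ T` (meaningful when the heights agree). -/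
def hcat (S T : Str2 A) : Str2 A :=
  mk' S.h (S.w + T.w) fun i j => if j < S.w then S.f i j else T.f i (j - S.w)

/-- Vertical concatenation `S ⊟ T` (meaningful when the widths agree). -/
def vcat (S T : Str2 A) : Str2 A :=
  mk' (S.h + T.h) S.w fun i j => if i < S.h then S.f i j else T.f (i - S.h) j

/-- Horizontal concatenation `S₁ ⊞ S₂ ⊞ ⋯ ⊞ S_k` of a list of 2D strings. -/
def hcatList : List (Str2 A) → Str2 A
  | [] => empty
  | S :: rest => rest.foldl hcat S

/-- Vertical concatenation `S₁ ⊟ S₂ ⊟ ⋯ ⊟ S_k` of a list of 2D strings. -/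
def vcatList : List (Str2 A) → Str2 A
  | [] => empty
  | S :: rest => rest.foldl vcat S

/-- The transpose. -/
def transpose (S : Str2 A) : Str2 A := mk' S.w S.h fun i j => S.f j i

/-- The `i`-th row (0-indexed) of `S`, as a `1 × w` 2D string. -/
def rowStr (S : Str2 A) (i : ℕ) : Str2 A := mk' 1 S.w fun _ j => S.f i j

/-- The `j`-th column (0-indexed) of `S`, read top to bottom, as a `1 × h` 2D string. -/
def colStr (S : Str2 A) (j : ℕ) : Str2 A := mk' 1 S.h fun _ i => S.f i j

/-- A height-one 2D string, viewed as an ordinary (1D) string, i.e. a list. -/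
def toList (S : Str2 A) : List A := (List.range S.w).filterMap fun j => S.f 0 j

/-- An ordinary (1D) string viewed as a height-one 2D string. -/
def ofList (l : List A) : Str2 A := mk' 1 l.length fun _ j => l[j]?

/-- The concatenation of all rows of `S` from top to bottom,
as a height-one 2D string of width `h * w`. -/
def rowsConcat (S : Str2 A) : Str2 A :=
  mk' 1 (S.h * S.w) fun _ j => S.f (j / S.w) (j % S.w)

end Str2

/-- The right-hand side of a production of a 2D SLP: a single character,
a horizontal concatenation of two nonterminals, or a vertical concatenation
of two nonterminals. -/
inductive Rhs2 (A V : Type) where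
  | chr : A → Rhs2 A V
  | horiz : V → V → Rhs2 A V
  | vert : V → V → Rhs2 A V

/-- A two-dimensional straight-line program over the alphabet `A`:
a finite set `V` of nonterminals, a starting nonterminal, and a production
map `rhs`.  Acyclicity of the relation "appears in the right-hand side of"
is witnessed by the function `rank`, which strictly decreases from the
left-hand side of each production to the nonterminals on its right-hand side. -/
structure SLP2 (A : Type) where
  V : Type
  fintypeV : Fintype V
  start : V
  rhs : V → Rhs2 A V
  rank : V → ℕ
  rank_horiz : ∀ {X Y Z}, rhs X = Rhs2.horiz Y Z → rank Y < rank X ∧ rank Z < rank X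
  rank_vert : ∀ {X Y Z}, rhs X = Rhs2.vert Y Z → rank Y < rank X ∧ rank Z < rank X

namespace SLP2

variable {A : Type}

/-- Fuel-based evaluation of expansions (with enough fuel it computes the
unique expansion of a nonterminal). -/
def expAux (G : SLP2 A) : ℕ → G.V → Str2 A
  | 0, _ => Str2.empty
  | n + 1, X =>
    match G.rhs X with
    | .chr a => Str2.single a
    | .horiz Y Z => (G.expAux n Y).hcat (G.expAux n Z)
    | .vert Y Z => (G.expAux n Y).vcat (G.expAux n Z)

/-- The (unique) expansion of a nonterminal `X`: since `rank` strictly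
decreases along productions, fuel `rank X + 1` always suffices. -/
def expNT (G : SLP2 A) (X : G.V) : Str2 A := G.expAux (G.rank X + 1) X

/-- The 2D string derived by the SLP. -/
def exp (G : SLP2 A) : Str2 A := G.expNT G.start

/-- Fuel-based computation of the depth of the derivation tree below a
nonterminal (a node labeled by a production `chr σ` has a single leaf child). -/
def depthAux (G : SLP2 A) : ℕ → G.V → ℕ
  | 0, _ => 0
  | n + 1, X =>
    match G.rhs X with
    | .chr _ => 1
    | .horiz Y Z => 1 + max (G.depthAux n Y) (G.depthAux n Z)
    | .vert Y Z => 1 + max (G.depthAux n Y) (G.depthAux n Z)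

/-- The depth of the derivation tree below nonterminal `X`. -/
def depthNT (G : SLP2 A) (X : G.V) : ℕ := G.depthAux (G.rank X + 1) X

/-- The depth of the SLP: the depth of its derivation tree. -/
def depth (G : SLP2 A) : ℕ := G.depthNT G.start

/-- The size of the SLP: the total number of symbols on the right-hand
sides of all productions. -/
def size (G : SLP2 A) : ℕ :=
  letI := G.fintypeV
  ∑ X : G.V, (match G.rhs X with
    | .chr _ => 1
    | .horiz _ _ => 2
    | .vert _ _ => 2)

/-- The number of nonterminals of the SLP. -/
def numNT (G : SLP2 A) : ℕ :=
  letI := G.fintypeV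
  Fintype.card G.V

/-- Well-formedness: dimensions match in every production, i.e. in a
horizontal concatenation both arguments have equal heights, and in a
vertical concatenation both arguments have equal widths. -/
def WF (G : SLP2 A) : Prop :=
  ∀ X : G.V,
    match G.rhs X with
    | .chr _ => True
    | .horiz Y Z => (G.expNT Y).h = (G.expNT Z).h
    | .vert Y Z => (G.expNT Y).w = (G.expNT Z).w

/-- A 1D SLP: a 2D SLP that uses only horizontal concatenations and derives
a string of height `1`. -/
def OneDim (G : SLP2 A) : Prop :=
  (∀ X Y Z, G.rhs X ≠ Rhs2.vert Y Z) ∧ (G.exp).h = 1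

end SLP2

/-! ### Auxiliary material for the proof -/

namespace Str2

variable {A : Type}

@[simp] theorem mk'_h (h w : ℕ) (g : ℕ → ℕ → Option A) : (mk' h w g).h = h := rfl
@[simp] theorem mk'_w (h w : ℕ) (g : ℕ → ℕ → Option A) : (mk' h w g).w = w := rfl

theorem mk'_f (h w : ℕ) (g : ℕ → ℕ → Option A) (i j : ℕ) :
    (mk' h w g).f i j = if i < h ∧ j < w then g i j else none := rfl

theorem mk'_eq_mk' {h w h' w' : ℕ} {g g' : ℕ → ℕ → Option A}
    (hh : h = h') (hw : w = w')
    (hg : ∀ i j, i < h → j < w → g i j = g' i j) :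
    mk' h w g = mk' h' w' g' := by
  subst hh hw
  unfold mk'
  refine congrArg _ ?_
  funext i j
  by_cases hij : i < h ∧ j < w
  · simp only [if_pos hij, hg i j hij.1 hij.2]
  · simp only [if_neg hij]

@[simp] theorem hcat_h (S T : Str2 A) : (S.hcat T).h = S.h := rfl
@[simp] theorem hcat_w (S T : Str2 A) : (S.hcat T).w = S.w + T.w := rfl
@[simp] theorem vcat_h (S T : Str2 A) : (S.vcat T).h = S.h + T.h := rfl
@[simp] theorem vcat_w (S T : Str2 A) : (S.vcat T).w = S.w := rfl
@[simp] theorem rowStr_h (S : Str2 A) (i : ℕ) : (S.rowStr i).h = 1 := rfl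
@[simp] theorem rowStr_w (S : Str2 A) (i : ℕ) : (S.rowStr i).w = S.w := rfl
@[simp] theorem single_h (a : A) : (single a).h = 1 := rfl
@[simp] theorem single_w (a : A) : (single a).w = 1 := rfl

theorem rowStr_single (a : A) : (single a).rowStr 0 = single a := by
  unfold rowStr single
  refine mk'_eq_mk' rfl rfl ?_
  intro i j hi hj
  simp only [mk'_w] at hj
  simp [mk'_f]
  omega

theorem rowStr_hcat (S T : Str2 A) (i : ℕ) (hi : i < S.h) :
    (S.hcat T).rowStr i = (S.rowStr i).hcat (T.rowStr i) := by
  unfold rowStr hcat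
  refine mk'_eq_mk' rfl rfl ?_
  intro r j hr hj
  simp only [mk'_w] at hj ⊢
  simp only [mk'_f, mk'_w]
  by_cases hjS : j < S.w
  · simp [hjS, hi, hj, hr]
  · simp [hjS, hi, hr, show j - S.w < T.w by omega]
    omega

theorem rowStr_vcat_left (S T : Str2 A) (i : ℕ) (hi : i < S.h) :
    (S.vcat T).rowStr i = S.rowStr i := by
  unfold rowStr vcat
  refine mk'_eq_mk' rfl rfl ?_
  intro r j hr hj
  simp only [mk'_w] at hj ⊢
  simp only [mk'_f, mk'_w]
  simp [hi, hj]
  omega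

theorem rowStr_vcat_right (S T : Str2 A) (i : ℕ) (hi : ¬ i < S.h) (hi2 : i < S.h + T.h)
    (hw : S.w = T.w) :
    (S.vcat T).rowStr i = T.rowStr (i - S.h) := by
  unfold rowStr vcat
  refine mk'_eq_mk' rfl hw ?_
  intro r j hr hj
  simp only [mk'_w] at hj ⊢
  simp only [mk'_f, mk'_w]
  simp [hi, hj, hw, hw ▸ hj, hi2]

end Str2
namespace SLP2

variable {A : Type}

theorem expAux_eq (G : SLP2 A) : ∀ (k n : ℕ) (X : G.V), G.rank X ≤ k → G.rank X < n →
    G.expAux n X = G.expNT X := by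
  intro k
  induction k with
  | zero =>
    intro n X hk hn
    obtain ⟨n', rfl⟩ : ∃ n', n = n' + 1 := ⟨n - 1, by omega⟩
    unfold expNT
    rw [show G.rank X + 1 = 0 + 1 by omega]
    cases hr : G.rhs X with
    | chr a => simp only [expAux, hr]
    | horiz Y Z => exact absurd (G.rank_horiz hr).1 (by omega)
    | vert Y Z => exact absurd (G.rank_vert hr).1 (by omega)
  | succ k ih =>
    intro n X hk hn
    obtain ⟨n', rfl⟩ : ∃ n', n = n' + 1 := ⟨n - 1, by omega⟩
    unfold expNT
    cases hr : G.rhs X with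
    | chr a => simp only [expAux, hr]
    | horiz Y Z =>
      have h1 := G.rank_horiz hr
      simp only [expAux, hr]
      rw [ih n' Y (by omega) (by omega), ih n' Z (by omega) (by omega),
        ih (G.rank X) Y (by omega) (by omega), ih (G.rank X) Z (by omega) (by omega)]
    | vert Y Z =>
      have h1 := G.rank_vert hr
      simp only [expAux, hr]
      rw [ih n' Y (by omega) (by omega), ih n' Z (by omega) (by omega),
        ih (G.rank X) Y (by omega) (by omega), ih (G.rank X) Z (by omega) (by omega)]

theorem expNT_chr (G : SLP2 A) {X : G.V} {a : A} (h : G.rhs X = .chr a) :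
    G.expNT X = Str2.single a := by
  unfold expNT; simp only [expAux, h]

theorem expNT_horiz (G : SLP2 A) {X Y Z : G.V} (h : G.rhs X = .horiz Y Z) :
    G.expNT X = (G.expNT Y).hcat (G.expNT Z) := by
  have h1 := G.rank_horiz h
  show G.expAux (G.rank X + 1) X = _
  simp only [expAux, h]
  show (G.expAux (G.rank X) Y).hcat (G.expAux (G.rank X) Z) = _
  rw [expAux_eq G (G.rank Y) _ Y le_rfl h1.1, expAux_eq G (G.rank Z) _ Z le_rfl h1.2]

theorem expNT_vert (G : SLP2 A) {X Y Z : G.V} (h : G.rhs X = .vert Y Z) :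
    G.expNT X = (G.expNT Y).vcat (G.expNT Z) := by
  have h1 := G.rank_vert h
  show G.expAux (G.rank X + 1) X = _
  simp only [expAux, h]
  show (G.expAux (G.rank X) Y).vcat (G.expAux (G.rank X) Z) = _
  rw [expAux_eq G (G.rank Y) _ Y le_rfl h1.1, expAux_eq G (G.rank Z) _ Z le_rfl h1.2]

theorem expNT_congr (G : SLP2 A) {X X' : G.V} (h : G.rhs X = G.rhs X') :
    G.expNT X = G.expNT X' := by
  cases hr : G.rhs X' with
  | chr a => rw [expNT_chr G (h.trans hr), expNT_chr G hr]
  | horiz Y Z => rw [expNT_horiz G (h.trans hr), expNT_horiz G hr]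
  | vert Y Z => rw [expNT_vert G (h.trans hr), expNT_vert G hr]

theorem expNT_h_pos_aux (G : SLP2 A) : ∀ (k : ℕ) (X : G.V), G.rank X ≤ k →
    0 < (G.expNT X).h := by
  intro k
  induction k with
  | zero =>
    intro X hk
    cases hr : G.rhs X with
    | chr a => rw [expNT_chr G hr]; norm_num
    | horiz Y Z => exact absurd (G.rank_horiz hr).1 (by omega)
    | vert Y Z => exact absurd (G.rank_vert hr).1 (by omega)
  | succ k ih =>
    intro X hk
    cases hr : G.rhs X with
    | chr a => rw [expNT_chr G hr]; norm_num
    | horiz Y Z =>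
      rw [expNT_horiz G hr]
      simpa using ih Y (by have := (G.rank_horiz hr).1; omega)
    | vert Y Z =>
      rw [expNT_vert G hr]
      have := ih Y (by have := (G.rank_vert hr).1; omega)
      simp only [Str2.vcat_h]
      omega

theorem expNT_h_pos (G : SLP2 A) (X : G.V) : 0 < (G.expNT X).h :=
  expNT_h_pos_aux G (G.rank X) X le_rfl

theorem expNT_h_one (G : SLP2 A) (hv : ∀ X Y Z, G.rhs X ≠ .vert Y Z) :
    ∀ (k : ℕ) (X : G.V), G.rank X ≤ k → (G.expNT X).h = 1 := by
  intro k
  induction k with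
  | zero =>
    intro X hk
    cases hr : G.rhs X with
    | chr a => rw [expNT_chr G hr]; rfl
    | horiz Y Z => exact absurd (G.rank_horiz hr).1 (by omega)
    | vert Y Z => exact absurd (hr) (hv X Y Z)
  | succ k ih =>
    intro X hk
    cases hr : G.rhs X with
    | chr a => rw [expNT_chr G hr]; rfl
    | horiz Y Z =>
      rw [expNT_horiz G hr]
      simpa using ih Y (by have := (G.rank_horiz hr).1; omega)
    | vert Y Z => exact absurd (hr) (hv X Y Z)

end SLP2
namespace SLP2

variable {A : Type}

/-- The production for the nonterminal deriving row `i` of `exp X`, resolving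
through vertical concatenations. -/
def rowRhs (G : SLP2 A) (N : ℕ) (X : G.V) (i : Fin N) :
    Rhs2 A ((G.V × Fin N) ⊕ Fin N) :=
  match hx : G.rhs X with
  | .chr a => .chr a
  | .horiz Y Z => .horiz (.inl (Y, i)) (.inl (Z, i))
  | .vert Y Z =>
    if i.val < (G.expNT Y).h then rowRhs G N Y i
    else rowRhs G N Z ⟨i.val - (G.expNT Y).h, by omega⟩
termination_by G.rank X
decreasing_by
  · exact (G.rank_vert hx).1
  · exact (G.rank_vert hx).2

theorem rowRhs_cases (G : SLP2 A) (N : ℕ) : ∀ (k : ℕ) (X : G.V), G.rank X ≤ k →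
    ∀ (i : Fin N),
    (∃ a, rowRhs G N X i = .chr a) ∨
    (∃ (Y Z : G.V) (i' : Fin N),
      rowRhs G N X i = .horiz (.inl (Y, i')) (.inl (Z, i')) ∧
      G.rank Y < G.rank X ∧ G.rank Z < G.rank X) := by
  intro k
  induction k with
  | zero =>
    intro X hk i
    rw [rowRhs]
    split
    · exact Or.inl ⟨_, rfl⟩
    · next Y Z hr => exact absurd (G.rank_horiz hr).1 (by omega)
    · next Y Z hr => exact absurd (G.rank_vert hr).1 (by omega)
  | succ k ih =>
    intro X hk i
    rw [rowRhs]
    split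
    · exact Or.inl ⟨_, rfl⟩
    · next Y Z hr =>
      have h1 := G.rank_horiz hr
      exact Or.inr ⟨Y, Z, i, rfl, h1.1, h1.2⟩
    · next Y Z hr =>
      have h1 := G.rank_vert hr
      split
      · rcases ih Y (by omega) i with h | ⟨Y', Z', i', he, hY, hZ⟩
        · exact Or.inl h
        · exact Or.inr ⟨Y', Z', i', he, by omega, by omega⟩
      · rcases ih Z (by omega) ⟨i.val - (G.expNT Y).h, by omega⟩ with
          h | ⟨Y', Z', i', he, hY, hZ⟩
        · exact Or.inl h
        · exact Or.inr ⟨Y', Z', i', he, by omega, by omega⟩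

theorem rowRhs_cases' (G : SLP2 A) (N : ℕ) (X : G.V) (i : Fin N) :
    (∃ a, rowRhs G N X i = .chr a) ∨
    (∃ (Y Z : G.V) (i' : Fin N),
      rowRhs G N X i = .horiz (.inl (Y, i')) (.inl (Z, i')) ∧
      G.rank Y < G.rank X ∧ G.rank Z < G.rank X) :=
  rowRhs_cases G N (G.rank X) X le_rfl i

/-- The maximum rank of a nonterminal. -/
def maxRank (G : SLP2 A) : ℕ :=
  letI := G.fintypeV
  Finset.univ.sup G.rank

theorem rank_le_maxRank (G : SLP2 A) (X : G.V) : G.rank X ≤ maxRank G := by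
  letI := G.fintypeV
  exact Finset.le_sup (Finset.mem_univ X)

/-- The production map of the row-linearizing 1D SLP. -/
def rowRhs2 (G : SLP2 A) (N : ℕ) (hN : 0 < N) :
    (G.V × Fin N) ⊕ Fin N → Rhs2 A ((G.V × Fin N) ⊕ Fin N)
  | .inl (X, i) => rowRhs G N X i
  | .inr k =>
    if k.val = 0 then rowRhs G N G.start ⟨0, hN⟩
    else .horiz (.inr ⟨k.val - 1, by omega⟩) (.inl (G.start, k))

/-- The rank function of the row-linearizing 1D SLP. -/
def rowRank (G : SLP2 A) (N : ℕ) : (G.V × Fin N) ⊕ Fin N → ℕ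
  | .inl (X, _) => G.rank X
  | .inr k => maxRank G + 1 + k.val

@[simp] theorem rowRhs2_inl (G : SLP2 A) (N : ℕ) (hN : 0 < N) (X : G.V) (i : Fin N) :
    rowRhs2 G N hN (.inl (X, i)) = rowRhs G N X i := rfl

theorem rowRhs2_inr (G : SLP2 A) (N : ℕ) (hN : 0 < N) (k : Fin N) :
    rowRhs2 G N hN (.inr k) =
      if k.val = 0 then rowRhs G N G.start ⟨0, hN⟩
      else .horiz (.inr ⟨k.val - 1, by omega⟩) (.inl (G.start, k)) := rfl

@[simp] theorem rowRank_inl (G : SLP2 A) (N : ℕ) (X : G.V) (i : Fin N) :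
    rowRank G N (.inl (X, i)) = G.rank X := rfl

@[simp] theorem rowRank_inr (G : SLP2 A) (N : ℕ) (k : Fin N) :
    rowRank G N (.inr k) = maxRank G + 1 + k.val := rfl

theorem rowRhs2_horiz (G : SLP2 A) (N : ℕ) (hN : 0 < N)
    {W P Q : (G.V × Fin N) ⊕ Fin N} (h : rowRhs2 G N hN W = Rhs2.horiz P Q) :
    rowRank G N P < rowRank G N W ∧ rowRank G N Q < rowRank G N W := by
  match W with
  | .inl (X, i) =>
    rw [rowRhs2_inl] at h
    rcases rowRhs_cases' G N X i with ⟨a, he⟩ | ⟨Y, Z, i', he, hY, hZ⟩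
    · rw [he] at h; exact absurd h (by simp)
    · rw [he] at h
      obtain ⟨h1, h2⟩ := Rhs2.horiz.inj h
      subst h1; subst h2
      simpa using ⟨hY, hZ⟩
  | .inr k =>
    rw [rowRhs2_inr] at h
    by_cases hk : k.val = 0
    · rw [if_pos hk] at h
      rcases rowRhs_cases' G N G.start ⟨0, hN⟩ with ⟨a, he⟩ | ⟨Y, Z, i', he, hY, hZ⟩
      · rw [he] at h; exact absurd h (by simp)
      · rw [he] at h
        obtain ⟨h1, h2⟩ := Rhs2.horiz.inj h
        subst h1; subst h2
        have := rank_le_maxRank G G.start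
        constructor <;> simp <;> omega
    · rw [if_neg hk] at h
      obtain ⟨h1, h2⟩ := Rhs2.horiz.inj h
      subst h1; subst h2
      have := rank_le_maxRank G G.start
      constructor <;> simp <;> omega

theorem rowRhs2_not_vert (G : SLP2 A) (N : ℕ) (hN : 0 < N)
    (W P Q : (G.V × Fin N) ⊕ Fin N) : rowRhs2 G N hN W ≠ Rhs2.vert P Q := by
  intro h
  match W with
  | .inl (X, i) =>
    rw [rowRhs2_inl] at h
    rcases rowRhs_cases' G N X i with ⟨a, he⟩ | ⟨Y, Z, i', he, hY, hZ⟩ <;>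
      rw [he] at h <;> exact absurd h (by simp)
  | .inr k =>
    rw [rowRhs2_inr] at h
    by_cases hk : k.val = 0
    · rw [if_pos hk] at h
      rcases rowRhs_cases' G N G.start ⟨0, hN⟩ with ⟨a, he⟩ | ⟨Y, Z, i', he, hY, hZ⟩ <;>
        rw [he] at h <;> exact absurd h (by simp)
    · rw [if_neg hk] at h
      exact absurd h (by simp)

/-- The 1D SLP whose nonterminals are `(X, i)` (deriving row `i` of `exp X`)
together with comb nonterminals `k` (deriving the concatenation of rows
`0, …, k` of `exp G`). -/
def rowSLP (G : SLP2 A) (N : ℕ) (hN : 0 < N) : SLP2 A where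
  V := (G.V × Fin N) ⊕ Fin N
  fintypeV := letI := G.fintypeV; inferInstance
  start := .inr ⟨N - 1, by omega⟩
  rhs := rowRhs2 G N hN
  rank := rowRank G N
  rank_horiz := fun h => rowRhs2_horiz G N hN h
  rank_vert := fun h => absurd h (rowRhs2_not_vert G N hN _ _ _)

theorem rowSLP_no_vert (G : SLP2 A) (N : ℕ) (hN : 0 < N) :
    ∀ W Y Z, (rowSLP G N hN).rhs W ≠ Rhs2.vert Y Z :=
  fun W Y Z => rowRhs2_not_vert G N hN W Y Z

end SLP2
namespace SLP2

variable {A : Type}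

theorem rowRhs_eq_chr (G : SLP2 A) (N : ℕ) {X : G.V} {a : A} (hx : G.rhs X = .chr a)
    (i : Fin N) : rowRhs G N X i = .chr a := by
  rw [rowRhs]
  split
  · next a' hr => rw [hx] at hr; cases hr; rfl
  · next Y Z hr => rw [hx] at hr; cases hr
  · next Y Z hr => rw [hx] at hr; cases hr

theorem rowRhs_eq_horiz (G : SLP2 A) (N : ℕ) {X Y Z : G.V} (hx : G.rhs X = .horiz Y Z)
    (i : Fin N) : rowRhs G N X i = .horiz (.inl (Y, i)) (.inl (Z, i)) := by
  rw [rowRhs]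
  split
  · next a' hr => rw [hx] at hr; cases hr
  · next Y' Z' hr => rw [hx] at hr; cases hr; rfl
  · next Y' Z' hr => rw [hx] at hr; cases hr

theorem rowRhs_eq_vert (G : SLP2 A) (N : ℕ) {X Y Z : G.V} (hx : G.rhs X = .vert Y Z)
    (i : Fin N) :
    rowRhs G N X i =
      if _ : i.val < (G.expNT Y).h then rowRhs G N Y i
      else rowRhs G N Z ⟨i.val - (G.expNT Y).h, by omega⟩ := by
  rw [rowRhs]
  split
  · next a' hr => rw [hx] at hr; cases hr
  · next Y' Z' hr => rw [hx] at hr; cases hr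
  · next Y' Z' hr =>
    rw [hx] at hr; cases hr
    rfl

theorem rowSLP_rhs_inl (G : SLP2 A) (N : ℕ) (hN : 0 < N) (X : G.V) (i : Fin N) :
    (rowSLP G N hN).rhs (.inl (X, i)) = rowRhs G N X i := rfl

theorem rowSLP_rhs_inr (G : SLP2 A) (N : ℕ) (hN : 0 < N) (k : Fin N) :
    (rowSLP G N hN).rhs (.inr k) =
      if k.val = 0 then rowRhs G N G.start ⟨0, hN⟩
      else .horiz (.inr ⟨k.val - 1, by omega⟩) (.inl (G.start, k)) := rfl

theorem rowSLP_expNT_h (G : SLP2 A) (N : ℕ) (hN : 0 < N)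
    (W : (rowSLP G N hN).V) : ((rowSLP G N hN).expNT W).h = 1 :=
  expNT_h_one (rowSLP G N hN) (rowSLP_no_vert G N hN) ((rowSLP G N hN).rank W) W le_rfl

/-- Main correctness of the row nonterminals. -/
theorem rowSLP_expNT_inl (G : SLP2 A) (N : ℕ) (hN : 0 < N) (wf : G.WF) :
    ∀ (k : ℕ) (X : G.V), G.rank X ≤ k → ∀ (i : Fin N), i.val < (G.expNT X).h →
      (rowSLP G N hN).expNT (.inl (X, i)) = (G.expNT X).rowStr i.val := by
  intro k
  induction k with
  | zero =>
    intro X hk i hi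
    cases hr : G.rhs X with
    | chr a =>
      have h1 : (rowSLP G N hN).rhs (.inl (X, i)) = .chr a := by
        rw [rowSLP_rhs_inl, rowRhs_eq_chr G N hr]
        rfl
      rw [expNT_chr _ h1, expNT_chr G hr]
      rw [expNT_chr G hr] at hi
      have : i.val = 0 := by simpa using hi
      rw [this, Str2.rowStr_single]
    | horiz Y Z => exact absurd (G.rank_horiz hr).1 (by omega)
    | vert Y Z => exact absurd (G.rank_vert hr).1 (by omega)
  | succ k ih =>
    intro X hk i hi
    cases hr : G.rhs X with
    | chr a =>
      have h1 : (rowSLP G N hN).rhs (.inl (X, i)) = .chr a := by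
        rw [rowSLP_rhs_inl, rowRhs_eq_chr G N hr]
        rfl
      rw [expNT_chr _ h1, expNT_chr G hr]
      rw [expNT_chr G hr] at hi
      have : i.val = 0 := by simpa using hi
      rw [this, Str2.rowStr_single]
    | horiz Y Z =>
      have hrk := G.rank_horiz hr
      have hwf := wf X
      rw [hr] at hwf
      simp only at hwf
      have h1 : (rowSLP G N hN).rhs (.inl (X, i)) =
          .horiz (.inl (Y, i)) (.inl (Z, i)) := by
        rw [rowSLP_rhs_inl, rowRhs_eq_horiz G N hr]
        rfl
      rw [expNT_horiz _ h1, expNT_horiz G hr]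
      rw [expNT_horiz G hr] at hi
      simp only [Str2.hcat_h] at hi
      rw [ih Y (by omega) i hi, ih Z (by omega) i (by omega),
        Str2.rowStr_hcat _ _ _ hi]
    | vert Y Z =>
      have hrk := G.rank_vert hr
      have hwf := wf X
      rw [hr] at hwf
      simp only at hwf
      rw [expNT_vert G hr] at hi
      simp only [Str2.vcat_h] at hi
      by_cases hiY : i.val < (G.expNT Y).h
      · have h1 : (rowSLP G N hN).rhs (.inl (X, i)) =
            (rowSLP G N hN).rhs (.inl (Y, i)) := by
          rw [rowSLP_rhs_inl, rowSLP_rhs_inl, rowRhs_eq_vert G N hr, dif_pos hiY]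
        rw [expNT_congr _ h1, ih Y (by omega) i hiY, expNT_vert G hr,
          Str2.rowStr_vcat_left _ _ _ hiY]
      · have h1 : (rowSLP G N hN).rhs (.inl (X, i)) =
            (rowSLP G N hN).rhs (.inl (Z, ⟨i.val - (G.expNT Y).h, by omega⟩)) := by
          rw [rowSLP_rhs_inl, rowSLP_rhs_inl, rowRhs_eq_vert G N hr, dif_neg hiY]
        rw [expNT_congr _ h1,
          ih Z (by omega) ⟨i.val - (G.expNT Y).h, by omega⟩ (by simp; omega),
          expNT_vert G hr, Str2.rowStr_vcat_right _ _ _ hiY (by omega) hwf]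

end SLP2
namespace Str2

variable {A : Type}

theorem rowStr_zero_eq (S : Str2 A) :
    S.rowStr 0 = mk' 1 (1 * S.w) (fun _ j => S.f (j / S.w) (j % S.w)) := by
  unfold rowStr
  refine mk'_eq_mk' rfl (one_mul _).symm ?_
  intro i j hi hj
  rw [Nat.div_eq_of_lt hj, Nat.mod_eq_of_lt hj]

theorem hcat_row_step (S : Str2 A) (m : ℕ) :
    (mk' 1 ((m + 1) * S.w) (fun _ j => S.f (j / S.w) (j % S.w))).hcat
        (S.rowStr (m + 1)) =
      mk' 1 ((m + 2) * S.w) (fun _ j => S.f (j / S.w) (j % S.w)) := by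
  unfold hcat
  refine mk'_eq_mk' rfl (by simp only [mk'_w, rowStr_w]; ring) ?_
  intro i j hi hj
  simp only [mk'_w, rowStr_w] at hj ⊢
  by_cases hjm : j < (m + 1) * S.w
  · simp [hjm, mk'_f, show i < 1 from hi]
  · simp only [hjm, ↓reduceIte]
    unfold rowStr
    rw [mk'_f, if_pos ⟨hi, by omega⟩]
    have hw : 0 < S.w := by omega
    obtain ⟨r, hr, rfl⟩ : ∃ r, r < S.w ∧ j = r + (m + 1) * S.w :=
      ⟨j - (m + 1) * S.w, by omega, by omega⟩
    rw [Nat.add_sub_cancel, Nat.add_mul_div_right _ _ hw, Nat.add_mul_mod_self_right,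
      Nat.div_eq_of_lt hr, Nat.mod_eq_of_lt hr]
    norm_num

end Str2

namespace SLP2

variable {A : Type}

theorem rowSLP_expNT_inr (G : SLP2 A) (N : ℕ) (hN : 0 < N) (wf : G.WF)
    (hNS : N ≤ (G.expNT G.start).h) :
    ∀ (m : ℕ) (k : Fin N), k.val = m →
      (rowSLP G N hN).expNT (.inr k) =
        Str2.mk' 1 ((k.val + 1) * (G.expNT G.start).w)
          (fun _ j => (G.expNT G.start).f (j / (G.expNT G.start).w)
            (j % (G.expNT G.start).w)) := by
  intro m
  induction m with
  | zero =>
    intro k hk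
    have h1 : (rowSLP G N hN).rhs (.inr k) =
        (rowSLP G N hN).rhs (.inl (G.start, ⟨0, hN⟩)) := by
      rw [rowSLP_rhs_inr, if_pos hk, rowSLP_rhs_inl]
    rw [expNT_congr _ h1,
      rowSLP_expNT_inl G N hN wf (G.rank G.start) G.start le_rfl ⟨0, hN⟩
        (by simpa using expNT_h_pos G G.start),
      hk]
    exact Str2.rowStr_zero_eq _
  | succ m ihm =>
    intro k hk
    have hk0 : ¬ k.val = 0 := by omega
    have h1 : (rowSLP G N hN).rhs (.inr k) =
        .horiz (.inr ⟨k.val - 1, by omega⟩) (.inl (G.start, k)) := by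
      rw [rowSLP_rhs_inr, if_neg hk0]
      rfl
    rw [expNT_horiz _ h1,
      ihm ⟨k.val - 1, by omega⟩ (by simp; omega),
      rowSLP_expNT_inl G N hN wf (G.rank G.start) G.start le_rfl k (by omega)]
    have hv : (⟨k.val - 1, by omega⟩ : Fin N).val = m := by simp; omega
    rw [hv, hk]
    have := Str2.hcat_row_step (G.expNT G.start) m
    rw [show m + 1 + 1 = m + 2 from rfl]
    exact this

end SLP2
namespace SLP2

variable {A : Type}

theorem card_le_size (G : SLP2 A) :
    (letI := G.fintypeV; Fintype.card G.V) ≤ G.size := by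
  letI := G.fintypeV
  unfold size
  rw [← Finset.card_univ, Finset.card_eq_sum_ones]
  refine Finset.sum_le_sum ?_
  intro X _
  cases G.rhs X <;> simp

theorem one_le_size (G : SLP2 A) : 1 ≤ G.size := by
  letI := G.fintypeV
  have h1 : 0 < Fintype.card G.V := Fintype.card_pos_iff.mpr ⟨G.start⟩
  have := card_le_size G
  omega

theorem rowSLP_size (G : SLP2 A) (N : ℕ) (hN : 0 < N) :
    (rowSLP G N hN).size ≤ 4 * G.size * N := by
  letI := G.fintypeV
  letI : Fintype (rowSLP G N hN).V := (rowSLP G N hN).fintypeV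
  have h2 : (rowSLP G N hN).size ≤ 2 * (Fintype.card G.V * N + N) := by
    unfold size
    refine le_trans (Finset.sum_le_sum (g := fun _ => 2) fun W _ => ?_) ?_
    · cases (rowSLP G N hN).rhs W <;> simp
    · rw [Finset.sum_const, Finset.card_univ, smul_eq_mul]
      show Fintype.card ((G.V × Fin N) ⊕ Fin N) * 2 ≤ _
      rw [Fintype.card_sum, Fintype.card_prod, Fintype.card_fin]
      omega
  have h3 := card_le_size G
  have h4 := one_le_size G
  calc (rowSLP G N hN).size ≤ 2 * (Fintype.card G.V * N + N) := h2
    _ ≤ 2 * (G.size * N + G.size * N) := by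
        have := Nat.mul_le_mul_right N h3
        have := Nat.mul_le_mul_right N h4
        omega
    _ = 4 * G.size * N := by ring

end SLP2

theorem row_linearization' :
    ∃ c : ℕ, 0 < c ∧
      ∀ (A : Type) (_ : Fintype A) (G : SLP2 A), G.WF →
        ∃ G' : SLP2 A, G'.WF ∧ G'.OneDim ∧
          G'.size ≤ c * G.size * (G.exp).h ∧
          G'.exp = (G.exp).rowsConcat := by
  refine ⟨4, by norm_num, ?_⟩
  intro A _ G wf
  have hN : 0 < (G.exp).h := SLP2.expNT_h_pos G G.start
  set N := (G.exp).h with hNdef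
  refine ⟨SLP2.rowSLP G N hN, ?_, ?_, SLP2.rowSLP_size G N hN, ?_⟩
  · intro W
    cases h : (SLP2.rowSLP G N hN).rhs W with
    | chr a => simp only [h]
    | horiz P Q =>
      simp only [h]
      rw [SLP2.rowSLP_expNT_h, SLP2.rowSLP_expNT_h]
    | vert P Q => exact absurd h (SLP2.rowSLP_no_vert G N hN W P Q)
  · exact ⟨SLP2.rowSLP_no_vert G N hN, SLP2.rowSLP_expNT_h G N hN _⟩
  · have key := SLP2.rowSLP_expNT_inr G N hN wf le_rfl (N - 1) ⟨N - 1, by omega⟩ rfl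
    show (SLP2.rowSLP G N hN).expNT (.inr ⟨N - 1, by omega⟩) = _
    rw [key]
    unfold Str2.rowsConcat
    have : (⟨N - 1, by omega⟩ : Fin N).val + 1 = N := by simp; omega
    rw [this]
    rfl

/-- row linearization. There is an absolute constant `c > 0`
such that: given a 2D SLP `G` deriving a 2D string `T` of size `N × M`, there
is a 1D SLP of size at most `c * |G| * N` deriving the 1D string
`T[1] ⬝ T[2] ⬝ ⋯ ⬝ T[N]` of length `N * M`, the concatenation of all rows of
`T` from top to bottom. -/
theorem row_linearization :
    ∃ c : ℕ, 0 < c ∧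
      ∀ (A : Type) (_ : Fintype A) (G : SLP2 A), G.WF →
        ∃ G' : SLP2 A, G'.WF ∧ G'.OneDim ∧
          G'.size ≤ c * G.size * (G.exp).h ∧
          G'.exp = (G.exp).rowsConcat := by
  exact row_linearization'
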